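/- Let φ = (1+√5)/2 and ζ = exp(2πi/5), and let π(x₀,...,x₄) = Σ x_k ζ^k ∈ ℂ. Then |π(0,2,1,−1,−2)| = φ · |π(0,1,1,−1,−1)|, i.e. the projected ceil version of the Penrose subperiod p₁₄ is exactly φ times longer than its projected floor version. -/

import Mathlib

open Real

lemma cos_two_pi_div_five' : Real.cos (2 * π / 5) = (Real.sqrt 5 - 1) / 4 := by
  have h1 : Real.cos (π / 5) = (1 + Real.sqrt 5) / 4 := Real.cos_pi_div_five
  have h2 : Real.cos (2 * (π / 5)) = 2 * Real.cos (π / 5) ^ 2 - 1 := Real.cos_two_mul _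
  have h5 : Real.sqrt 5 ^ 2 = 5 := Real.sq_sqrt (by norm_num)
  have : (2 : ℝ) * (π / 5) = 2 * π / 5 := by ring
  rw [this, h1] at h2
  rw [h2]; nlinarith [h5]

lemma sin_four_pi_div_five' :
    Real.sin (2 * (2 * π / 5)) = 2 * Real.sin (2 * π / 5) * Real.cos (2 * π / 5) :=
  Real.sin_two_mul _

theorem penrose_ceil_floor_ratio :
    let φ : ℝ := (1 + Real.sqrt 5) / 2
    let ζ : ℂ := Complex.exp (2 * Real.pi * Complex.I / 5)
    let proj : (Fin 5 → ℝ) → ℂ := fun x => ∑ k : Fin 5, (x k : ℂ) * ζ ^ (k : ℕ)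
    ‖proj ![0, 2, 1, -1, -2]‖ = φ * ‖proj ![0, 1, 1, -1, -1]‖ := by
  intro φ ζ proj
  have hφ : (0:ℝ) ≤ φ := by
    have := Real.sqrt_nonneg 5
    simp only [φ]; linarith
  -- ζ^k = cos + sin I
  have hz : ∀ k : ℕ, ζ ^ k = ((Real.cos (2 * π * k / 5) : ℝ) : ℂ) +
      ((Real.sin (2 * π * k / 5) : ℝ) : ℂ) * Complex.I := by
    intro k
    have : ζ ^ k = Complex.exp (((2 * π * k / 5 : ℝ) : ℂ) * Complex.I) := by
      rw [← Complex.exp_nat_mul]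
      congr 1
      push_cast
      ring
    rw [this, Complex.exp_mul_I, Complex.ofReal_cos, Complex.ofReal_sin]
  have key : proj ![0, 2, 1, -1, -2] = (φ : ℂ) * proj ![0, 1, 1, -1, -1] := by
    simp only [proj, Fin.sum_univ_five, Matrix.cons_val_zero, Matrix.cons_val_one,
      Matrix.head_cons, Matrix.cons_val_two, Matrix.tail_cons, Matrix.cons_val_three,
      Matrix.cons_val_four]
    have h1 := hz 1
    have h2 := hz 2
    have h3 := hz 3
    have h4 := hz 4
    rw [show ((0:Fin 5):ℕ) = 0 from rfl, show ((1:Fin 5):ℕ) = 1 from rfl,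
      show ((2:Fin 5):ℕ) = 2 from rfl, show ((3:Fin 5):ℕ) = 3 from rfl,
      show ((4:Fin 5):ℕ) = 4 from rfl]
    -- reduce angles
    have c3 : Real.cos (2 * π * 3 / 5) = Real.cos (2 * π * 2 / 5) := by
      rw [show 2 * π * 3 / 5 = 2 * π - 2 * π * 2 / 5 by ring, Real.cos_two_pi_sub]
    have s3 : Real.sin (2 * π * 3 / 5) = -Real.sin (2 * π * 2 / 5) := by
      rw [show 2 * π * 3 / 5 = 2 * π - 2 * π * 2 / 5 by ring, Real.sin_two_pi_sub]
    have c4 : Real.cos (2 * π * 4 / 5) = Real.cos (2 * π / 5) := by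
      rw [show 2 * π * 4 / 5 = 2 * π - 2 * π / 5 by ring, Real.cos_two_pi_sub]
    have s4 : Real.sin (2 * π * 4 / 5) = -Real.sin (2 * π / 5) := by
      rw [show 2 * π * 4 / 5 = 2 * π - 2 * π / 5 by ring, Real.sin_two_pi_sub]
    have s2 : Real.sin (2 * π * 2 / 5) = 2 * Real.sin (2 * π / 5) * Real.cos (2 * π / 5) := by
      rw [show 2 * π * 2 / 5 = 2 * (2 * π / 5) by ring]; exact Real.sin_two_mul _
    simp only [Nat.cast_ofNat, Nat.cast_one] at h1 h2 h3 h4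
    rw [mul_one] at h1
    rw [c3, s3] at h3
    rw [c4, s4] at h4
    rw [h4, h3, h2, h1, s2, cos_two_pi_div_five']
    have h5 : Real.sqrt 5 ^ 2 = 5 := Real.sq_sqrt (by norm_num)
    set s := Real.sin (2 * π / 5)
    set c2 := Real.cos (2 * π * 2 / 5)
    simp only [φ, Complex.ext_iff, Complex.ofReal_neg]
    constructor
    · simp [Complex.add_re, Complex.mul_re]
    · simp [Complex.add_im, Complex.mul_im]
      have hs : s ≠ 0 := ne_of_gt (Real.sin_pos_of_pos_of_lt_pi (by positivity)
        (by nlinarith [Real.pi_pos]))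
      field_simp
      ring_nf
      rw [h5]
      ring
  rw [key, norm_mul, Complex.norm_real, Real.norm_eq_abs, abs_of_nonneg hφ]
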